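/- Fix $p \in (0,1]$ and $g > 0$, and let $J(\Delta,\tau) = \frac{\Delta}{2} + \frac{1}{2p} + \frac{\tau g + \frac{1-p}{2p}}{p(\Delta-1)+1}$. For each positive integer $s$, the unique $\tau \ge 0$ solving $J(s,\tau) = J(s+1,\tau)$ is $\tau_{\mathrm{eq}}(s) = \frac{s\,(p s - p + 2)}{2g}$. -/

import Mathlib

/-- The unique `τ ≥ 0` at which thresholds `s` and `s+1` have equal average
cost is `τ_eq(s) = s(ps - p + 2)/(2g)` (the Whittle index times the cardinality). -/
theorem stmt_5 (p g : ℝ) (hp0 : 0 < p) (hp1 : p ≤ 1) (hg : 0 < g)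
    (J : ℝ → ℝ → ℝ)
    (hJ : ∀ Δ τ : ℝ, J Δ τ = Δ / 2 + 1 / (2 * p) + (τ * g + (1 - p) / (2 * p)) / (p * (Δ - 1) + 1))
    (s : ℕ) (hs : 1 ≤ s) :
    ∀ τ : ℝ, 0 ≤ τ → (J (s : ℝ) τ = J ((s : ℝ) + 1) τ ↔ τ = (s : ℝ) * (p * s - p + 2) / (2 * g)) := by
  intro τ hτ
  have hs1 : (1 : ℝ) ≤ (s : ℝ) := by exact_mod_cast hs
  have hd1 : p * ((s : ℝ) - 1) + 1 ≠ 0 := by nlinarith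
  have hd2 : p * ((s : ℝ) + 1 - 1) + 1 ≠ 0 := by nlinarith
  rw [hJ, hJ]
  constructor <;> intro h
  · field_simp at h ⊢
    have key : p ^ 2 * (2 * τ * g) = p ^ 2 * ((s : ℝ) * (p * ((s : ℝ) - 1) + 2)) := by
      linear_combination h
    exact mul_left_cancel₀ (by positivity) key
  · field_simp at h ⊢
    linear_combination p ^ 2 * h
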